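/- Let M be a unital JC*-algebra realized inside B(H), i.e., A = B(H), and let u be an isometry in A (u*u = 1) with l = uu* ≠ 1. Let p, q be projections with pq = 0, p + q = l, central in lAl, and y = i(p - q)u. For θ ∈ ℝ define y_θ = y l + cos(θ) y (1 - l) + sin(θ)(1 - l). Then (y - y_θ)*(y - y_θ) = 2(1 - cos θ)((1 - l) - sin(θ)·a) where a = (1-l)((y + y*)/2)(1-l), and consequently y_θ ≠ y for all θ ∉ 2πℤ ∪ (π/2)(1 + 2ℤ). -/

import Mathlib

theorem stmt_19 {A : Type*} [CStarAlgebra A]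
    (u : A) (hu : star u * u = 1) (hl : u * star u ≠ 1)
    (p q : A) (hp_sa : star p = p) (hp_idem : p * p = p)
    (hq_sa : star q = q) (hq_idem : q * q = q)
    (h_orth : p * q = 0) (h_sum : p + q = u * star u)
    (hp_central : ∀ x : A, (u * star u) * x * (u * star u) = x → p * x = x * p)
    (hq_central : ∀ x : A, (u * star u) * x * (u * star u) = x → q * x = x * q) :
    let l := u * star u
    let y := Complex.I • ((p - q) * u)
    let a := (1 - l) * ((1 / 2 : ℂ) • (y + star y)) * (1 - l)
    let yθ : ℝ → A := fun θ =>
      y * l + (Real.cos θ : ℂ) • (y * (1 - l)) + (Real.sin θ : ℂ) • (1 - l)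
    (∀ θ : ℝ, star (y - yθ θ) * (y - yθ θ) =
      ((2 * (1 - Real.cos θ) : ℝ) : ℂ) • ((1 - l) - (Real.sin θ : ℂ) • a)) ∧
    (∀ θ : ℝ, (∀ k : ℤ, θ ≠ 2 * Real.pi * k) →
      (∀ k : ℤ, θ ≠ (Real.pi / 2) * (1 + 2 * k)) → yθ θ ≠ y) := by
  intro l y a yθ
  have hlrfl : l = u * star u := rfl
  have hyrfl : y = Complex.I • ((p - q) * u) := rfl
  have harfl : a = (1 - l) * ((1 / 2 : ℂ) • (y + star y)) * (1 - l) := rfl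
  have hyθ : ∀ θ : ℝ, yθ θ =
      y * l + (Real.cos θ : ℂ) • (y * (1 - l)) + (Real.sin θ : ℂ) • (1 - l) := fun _ => rfl
  clear_value yθ a y l
  have hqp : q * p = 0 := by
    have := congrArg star h_orth
    simpa [star_mul, hp_sa, hq_sa] using this
  have hstl : star l = l := by rw [hlrfl]; simp [star_mul]
  have hll : l * l = l := by
    rw [hlrfl, mul_assoc, ← mul_assoc (star u) u (star u), hu, one_mul]
  have hpq2 : (p - q) * (p - q) = l := by
    rw [mul_sub, sub_mul, sub_mul, hp_idem, hq_idem, h_orth, hqp, hlrfl, ← h_sum]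
    abel
  have hsy : star y = (-Complex.I) • (star u * (p - q)) := by
    rw [hyrfl, star_smul, star_mul, star_sub, hp_sa, hq_sa, Complex.star_def, Complex.conj_I,
      neg_smul]
  have hyy : star y * y = 1 := by
    rw [hsy, hyrfl, smul_mul_smul_comm]
    rw [neg_mul, Complex.I_mul_I, neg_neg, one_smul]
    rw [mul_assoc, ← mul_assoc (p - q) (p - q) u, hpq2, hlrfl, mul_assoc u (star u) u, hu,
      mul_one, hu]
  have hsts : star ((1 : A) - l) = 1 - l := by rw [star_sub, star_one, hstl]
  have hss : ((1 : A) - l) * (1 - l) = 1 - l := by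
    rw [mul_sub, mul_one, sub_mul, one_mul, hll, sub_self, sub_zero]
  have hdiff : ∀ θ : ℝ, y - yθ θ =
      ((1 - Real.cos θ : ℝ) : ℂ) • (y * (1 - l)) - ((Real.sin θ : ℝ) : ℂ) • (1 - l) := by
    intro θ
    have hy2 : y = y * l + y * (1 - l) := by
      rw [← mul_add, add_sub_cancel, mul_one]
    rw [hyθ θ]
    nth_rewrite 1 [hy2]
    push_cast
    module
  have hmain : ∀ θ : ℝ, star (y - yθ θ) * (y - yθ θ) =
      ((2 * (1 - Real.cos θ) : ℝ) : ℂ) • ((1 - l) - (Real.sin θ : ℂ) • a) := by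
    intro θ
    rw [hdiff θ]
    set c1 : ℂ := ((1 - Real.cos θ : ℝ) : ℂ) with hc1
    set c2 : ℂ := ((Real.sin θ : ℝ) : ℂ) with hc2
    set z : A := y * (1 - l) with hz
    have hzz : star z * z = 1 - l := by
      rw [hz, star_mul, hsts, mul_assoc, ← mul_assoc (star y) y (1 - l), hyy, one_mul, hss]
    have ha2 : (2 : ℂ) • a = (1 - l) * (y + star y) * (1 - l) := by
      rw [harfl, mul_smul_comm, smul_mul_assoc, smul_smul]
      norm_num
    have hw : star z * (1 - l) + (1 - l) * z = (2 : ℂ) • a := by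
      rw [ha2, hz, star_mul, hsts, mul_add, add_mul]
      noncomm_ring
    have hc1s : star c1 = c1 := by rw [hc1, Complex.star_def, Complex.conj_ofReal]
    have hc2s : star c2 = c2 := by rw [hc2, Complex.star_def, Complex.conj_ofReal]
    have expand : star (c1 • z - c2 • (1 - l)) * (c1 • z - c2 • (1 - l))
        = (c1 * c1) • (star z * z) - (c1 * c2) • (star z * (1 - l) + (1 - l) * z)
          + (c2 * c2) • ((1 - l) * (1 - l)) := by
      rw [star_sub, star_smul, star_smul, hc1s, hc2s, hsts]
      rw [sub_mul, mul_sub, mul_sub, smul_mul_smul_comm, smul_mul_smul_comm,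
        smul_mul_smul_comm, smul_mul_smul_comm]
      rw [smul_add]
      have : (c2 * c1) • ((1 - l) * z) = (c1 * c2) • ((1 - l) * z) := by rw [mul_comm]
      rw [this]
      abel
    rw [expand, hzz, hw, hss, smul_smul]
    match_scalars <;> rw [hc1, hc2] <;> norm_cast <;> push_cast <;>
      grind [Complex.sin_sq_add_cos_sq]
  refine ⟨hmain, ?_⟩
  intro θ h1 h2 hEq
  have hd0 : y - yθ θ = 0 := by rw [hEq, sub_self]
  have h0 : ((2 * (1 - Real.cos θ) : ℝ) : ℂ) • ((1 - l) - (Real.sin θ : ℂ) • a) = 0 := by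
    rw [← hmain θ, hd0, star_zero, zero_mul]
  have hc : Real.cos θ ≠ 1 := by
    intro h
    obtain ⟨n, hn⟩ := (Real.cos_eq_one_iff θ).mp h
    exact h1 n (by rw [← hn]; ring)
  have hC : ((2 * (1 - Real.cos θ) : ℝ) : ℂ) ≠ 0 := by
    exact_mod_cast mul_ne_zero two_ne_zero (sub_ne_zero.mpr (Ne.symm hc))
  have hsa : (1 : A) - l = (Real.sin θ : ℂ) • a := by
    have h := (smul_eq_zero.mp h0).resolve_left hC
    exact sub_eq_zero.mp h
  have hntA : Nontrivial A := ⟨⟨u * star u, 1, hl⟩⟩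
  have hyn : ‖y‖ = 1 := by
    have h := CStarRing.norm_star_mul_self (x := y)
    rw [hyy, norm_one] at h
    nlinarith [norm_nonneg y, sq_nonneg (‖y‖ - 1), sq_nonneg (‖y‖ + 1)]
  have hsne : (1 : A) - l ≠ 0 := by
    rw [sub_ne_zero]
    exact fun h => hl (hlrfl ▸ h.symm)
  have hsn : ‖(1 : A) - l‖ = 1 := by
    have h := CStarRing.norm_star_mul_self (x := (1 : A) - l)
    rw [hsts, hss] at h
    have hpos : 0 < ‖(1 : A) - l‖ := norm_pos_iff.mpr hsne
    have h2'' : ‖(1 : A) - l‖ * 1 = ‖(1 : A) - l‖ * ‖(1 : A) - l‖ := by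
      rw [mul_one]; exact h
    exact (mul_left_cancel₀ (ne_of_gt hpos) h2'').symm
  have han : ‖a‖ ≤ 1 := by
    have h1' : ‖a‖ ≤ ‖(1 - l) * ((1 / 2 : ℂ) • (y + star y))‖ * ‖(1 : A) - l‖ := by
      rw [harfl]; exact norm_mul_le _ _
    have h2' : ‖(1 - l) * ((1 / 2 : ℂ) • (y + star y))‖ ≤
        ‖(1 : A) - l‖ * ‖(1 / 2 : ℂ) • (y + star y)‖ := norm_mul_le _ _
    have h3' : ‖(1 / 2 : ℂ) • (y + star y)‖ ≤ 1 := by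
      rw [norm_smul]
      have : ‖y + star y‖ ≤ 2 := by
        calc ‖y + star y‖ ≤ ‖y‖ + ‖star y‖ := norm_add_le _ _
        _ = 2 := by rw [norm_star, hyn]; norm_num
      have hhalf : ‖(1 / 2 : ℂ)‖ = 1 / 2 := by norm_num
      rw [hhalf]; linarith
    rw [hsn] at h1' h2'
    nlinarith [norm_nonneg ((1 / 2 : ℂ) • (y + star y))]
  have hcos0 : Real.cos θ ≠ 0 := by
    intro h
    obtain ⟨k, hk⟩ := Real.cos_eq_zero_iff.mp h
    exact h2 k (by rw [hk]; ring)
  have hsinlt : |Real.sin θ| < 1 := by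
    have hsq : Real.sin θ ^ 2 < 1 := by
      have hcp : 0 < Real.cos θ ^ 2 := by positivity
      nlinarith [Real.sin_sq_add_cos_sq θ]
    nlinarith [sq_abs (Real.sin θ), abs_nonneg (Real.sin θ)]
  have hfinal : (1 : ℝ) < 1 := by
    have hnorm : ‖(1 : A) - l‖ = |Real.sin θ| * ‖a‖ := by
      rw [hsa, norm_smul, Complex.norm_real, Real.norm_eq_abs]
    rw [hsn] at hnorm
    have : |Real.sin θ| * ‖a‖ ≤ |Real.sin θ| * 1 :=
      mul_le_mul_of_nonneg_left han (abs_nonneg _)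
    calc (1 : ℝ) = |Real.sin θ| * ‖a‖ := hnorm
      _ ≤ |Real.sin θ| * 1 := this
      _ = |Real.sin θ| := by ring
      _ < 1 := hsinlt
  exact absurd hfinal (lt_irrefl 1)
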